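/- Let C (data c, t, n₁, n₂, n₃, k₁, k₂, k₃) be a C∞-special timelike Frenet curve in E⁴₂ and suppose there exist real constants α, β, γ with γ² > 1 such that α·k₂(s) - β·k₃(s) ≠ 0 and γ·(α·k₂(s) - β·k₃(s)) - α·k₁(s) = 1 for all s. Define c̄(s) = c(s) + α·n₁(s) + β·n₃(s). Then for all s: c̄'(s) = (α·k₂(s) - β·k₃(s))·(γ·t(s) + n₂(s)) and g(c̄'(s), c̄'(s)) = -(γ² - 1)·(α·k₂(s) - β·k₃(s))² < 0; in particular c̄ is a regular timelike curve and its speed is ‖c̄'(s)‖ = √(γ² - 1)·|α·k₂(s) - β·k₃(s)|, where ‖v‖ = √|g(v,v)|. -/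

import Mathlib

noncomputable section

/-- The indefinite metric of semi-Euclidean space `E⁴₂`:
`g(v,w) = -v₁w₁ - v₂w₂ + v₃w₃ + v₄w₄`. -/
def g4 (v w : Fin 4 → ℝ) : ℝ :=
  -(v 0 * w 0) - v 1 * w 1 + v 2 * w 2 + v 3 * w 3

/-- The semi-Euclidean norm `‖v‖ = √|g(v,v)|` in `E⁴₂`. -/
def nrm4 (v : Fin 4 → ℝ) : ℝ := Real.sqrt |g4 v v|

/-- A `C^∞`-special timelike Frenet curve in `E⁴₂`: a unit-speed timelike curve
with Frenet frame `t, n₁, n₂, n₃` (with `t, n₁` timelike and `n₂, n₃` spacelike)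
and nowhere-vanishing curvatures `k₁, k₂, k₃` satisfying the Frenet equations
`t' = -k₁·n₁`, `n₁' = k₁·t + k₂·n₂`, `n₂' = k₂·n₁ + k₃·n₃`, `n₃' = -k₃·n₂`. -/
structure TimelikeFrenetE42 where
  c : ℝ → Fin 4 → ℝ
  t : ℝ → Fin 4 → ℝ
  n1 : ℝ → Fin 4 → ℝ
  n2 : ℝ → Fin 4 → ℝ
  n3 : ℝ → Fin 4 → ℝ
  k1 : ℝ → ℝ
  k2 : ℝ → ℝ
  k3 : ℝ → ℝ
  smooth_c : ContDiff ℝ (⊤ : ℕ∞) c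
  smooth_t : ContDiff ℝ (⊤ : ℕ∞) t
  smooth_n1 : ContDiff ℝ (⊤ : ℕ∞) n1
  smooth_n2 : ContDiff ℝ (⊤ : ℕ∞) n2
  smooth_n3 : ContDiff ℝ (⊤ : ℕ∞) n3
  smooth_k1 : ContDiff ℝ (⊤ : ℕ∞) k1
  smooth_k2 : ContDiff ℝ (⊤ : ℕ∞) k2
  smooth_k3 : ContDiff ℝ (⊤ : ℕ∞) k3
  deriv_c : ∀ s, HasDerivAt c (t s) s
  unit_t : ∀ s, g4 (t s) (t s) = -1
  unit_n1 : ∀ s, g4 (n1 s) (n1 s) = -1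
  unit_n2 : ∀ s, g4 (n2 s) (n2 s) = 1
  unit_n3 : ∀ s, g4 (n3 s) (n3 s) = 1
  orth_t_n1 : ∀ s, g4 (t s) (n1 s) = 0
  orth_t_n2 : ∀ s, g4 (t s) (n2 s) = 0
  orth_t_n3 : ∀ s, g4 (t s) (n3 s) = 0
  orth_n1_n2 : ∀ s, g4 (n1 s) (n2 s) = 0
  orth_n1_n3 : ∀ s, g4 (n1 s) (n3 s) = 0
  orth_n2_n3 : ∀ s, g4 (n2 s) (n3 s) = 0
  k1_ne : ∀ s, k1 s ≠ 0
  k2_ne : ∀ s, k2 s ≠ 0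
  k3_ne : ∀ s, k3 s ≠ 0
  frenet_t : ∀ s, HasDerivAt t (-(k1 s) • n1 s) s
  frenet_n1 : ∀ s, HasDerivAt n1 (k1 s • t s + k2 s • n2 s) s
  frenet_n2 : ∀ s, HasDerivAt n2 (k2 s • n1 s + k3 s • n3 s) s
  frenet_n3 : ∀ s, HasDerivAt n3 (-(k3 s) • n2 s) s

/-- For a `C^∞`-special timelike Frenet curve `C` in `E⁴₂` and constants `α, β, γ` with
`γ² > 1`, `α·k₂ - β·k₃ ≠ 0` and `γ·(α·k₂ - β·k₃) - α·k₁ = 1` everywhere, the curve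
`c̄ = c + α·n₁ + β·n₃` satisfies `c̄'(s) = (α·k₂(s) - β·k₃(s))·(γ·t(s) + n₂(s))` and
`g(c̄', c̄') = -(γ² - 1)·(α·k₂ - β·k₃)² < 0`; in particular `c̄` is a regular timelike
curve with speed `‖c̄'(s)‖ = √(γ² - 1)·|α·k₂(s) - β·k₃(s)|`. -/
theorem bertrand13_E42_mate_regular_timelike
    (C : TimelikeFrenetE42) (α β γ : ℝ) (hγ2 : γ ^ 2 > 1)
    (h1 : ∀ s, α * C.k2 s - β * C.k3 s ≠ 0)
    (h2 : ∀ s, γ * (α * C.k2 s - β * C.k3 s) - α * C.k1 s = 1) :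
    ∀ s,
      HasDerivAt (fun u => C.c u + α • C.n1 u + β • C.n3 u)
        ((α * C.k2 s - β * C.k3 s) • (γ • C.t s + C.n2 s)) s ∧
      g4 ((α * C.k2 s - β * C.k3 s) • (γ • C.t s + C.n2 s))
          ((α * C.k2 s - β * C.k3 s) • (γ • C.t s + C.n2 s)) =
        -((γ ^ 2 - 1) * (α * C.k2 s - β * C.k3 s) ^ 2) ∧
      g4 ((α * C.k2 s - β * C.k3 s) • (γ • C.t s + C.n2 s))
          ((α * C.k2 s - β * C.k3 s) • (γ • C.t s + C.n2 s)) < 0 ∧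
      (α * C.k2 s - β * C.k3 s) • (γ • C.t s + C.n2 s) ≠ 0 ∧
      nrm4 ((α * C.k2 s - β * C.k3 s) • (γ • C.t s + C.n2 s)) =
        Real.sqrt (γ ^ 2 - 1) * |α * C.k2 s - β * C.k3 s| := by
  intro s
  have h2s := h2 s
  have ht := C.unit_t s
  have hn2 := C.unit_n2 s
  have ho := C.orth_t_n2 s
  set m := α * C.k2 s - β * C.k3 s with hm
  have hd : HasDerivAt (fun u => C.c u + α • C.n1 u + β • C.n3 u)
      (m • (γ • C.t s + C.n2 s)) s := by
    have h := ((C.deriv_c s).add ((C.frenet_n1 s).const_smul α)).add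
      ((C.frenet_n3 s).const_smul β)
    refine h.congr_deriv ?_
    symm
    funext i
    simp only [Pi.add_apply, Pi.smul_apply, smul_eq_mul, Pi.neg_apply, neg_mul,
      smul_add, mul_add]
    linear_combination (C.t s i) * h2s
  have hg : g4 (m • (γ • C.t s + C.n2 s)) (m • (γ • C.t s + C.n2 s)) =
      -((γ ^ 2 - 1) * m ^ 2) := by
    simp only [g4, Pi.add_apply, Pi.smul_apply, smul_eq_mul] at *
    linear_combination (m^2*γ^2)*ht + (2*m^2*γ)*ho + m^2*hn2
  have hpos : (γ ^ 2 - 1) * m ^ 2 > 0 := by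
    have h2m : m ^ 2 > 0 := by
      have := abs_pos.mpr (h1 s)
      nlinarith [sq_abs m]
    exact mul_pos (by linarith) h2m
  have hlt : g4 (m • (γ • C.t s + C.n2 s)) (m • (γ • C.t s + C.n2 s)) < 0 := by
    rw [hg]; linarith
  refine ⟨hd, hg, hlt, ?_, ?_⟩
  · intro h
    rw [h] at hlt
    simp [g4] at hlt
  · rw [nrm4, hg, abs_neg, abs_of_pos hpos,
      Real.sqrt_mul (by linarith), Real.sqrt_sq_eq_abs]
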